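/- arXiv:1906.01209 — 2 statements merged into one kernel-verified Lean document; each statement's English description precedes it below -/
import Mathlib

section
/- There exists a constant C > 0 such that for every integer k ≥ 1 and every t ∈ [0,1], the tail of the trigonometric basis satisfies ∑_{l=k+1}^∞ ( E_l(t)² + ∫₀ᵗ E_l(τ)² dτ ) ≤ C/k. -/
open Real intervalIntegral

/-- The trigonometric basis of `L²([0,1])`: `e 1 = 1`, `e (2j) = √2 sin(2πj·)`,
`e (2j+1) = √2 cos(2πj·)` for `j ≥ 1`. -/
noncomputable def trigBasis (l : ℕ) (t : ℝ) : ℝ :=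
  if l = 1 then 1
  else if l % 2 = 0 then Real.sqrt 2 * Real.sin (2 * Real.pi * (l / 2 : ℕ) * t)
  else Real.sqrt 2 * Real.cos (2 * Real.pi * (l / 2 : ℕ) * t)

/-- `E_l(t) = ∫₀ᵗ e_l(s) ds`. -/
noncomputable def trigE (l : ℕ) (t : ℝ) : ℝ := ∫ s in (0:ℝ)..t, trigBasis l s

lemma my_integral_sin_mul (c : ℝ) (hc : c ≠ 0) (t : ℝ) :
    ∫ s in (0:ℝ)..t, Real.sin (c * s) = (1 - Real.cos (c * t)) / c := by
  have h : ∀ s ∈ Set.uIcc (0:ℝ) t,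
      HasDerivAt (fun x => -Real.cos (c * x) / c) (Real.sin (c * s)) s := by
    intro s _
    have h1 : HasDerivAt (fun x : ℝ => c * x) c s := by
      simpa using (hasDerivAt_id s).const_mul c
    have h2 := ((Real.hasDerivAt_cos (c * s)).comp s h1).neg.div_const c
    convert h2 using 1
    all_goals first | rfl | field_simp
  have := intervalIntegral.integral_eq_sub_of_hasDerivAt h
    (Continuous.intervalIntegrable (by continuity) 0 t)
  rw [this]
  simp
  ring

lemma my_integral_cos_mul (c : ℝ) (hc : c ≠ 0) (t : ℝ) :
    ∫ s in (0:ℝ)..t, Real.cos (c * s) = Real.sin (c * t) / c := by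
  have h : ∀ s ∈ Set.uIcc (0:ℝ) t,
      HasDerivAt (fun x => Real.sin (c * x) / c) (Real.cos (c * s)) s := by
    intro s _
    have h1 : HasDerivAt (fun x : ℝ => c * x) c s := by
      simpa using (hasDerivAt_id s).const_mul c
    have h2 := ((Real.hasDerivAt_sin (c * s)).comp s h1).div_const c
    convert h2 using 1
    all_goals first | rfl | field_simp
  have := intervalIntegral.integral_eq_sub_of_hasDerivAt h
    (Continuous.intervalIntegrable (by continuity) 0 t)
  rw [this]
  simp

lemma trigE_abs_le (m : ℕ) (hm : 2 ≤ m) (t : ℝ) :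
    |trigE m t| ≤ 2 / ((m / 2 : ℕ) : ℝ) := by
  set j : ℕ := m / 2 with hj
  have hj1 : 1 ≤ j := Nat.one_le_div_iff (by norm_num) |>.mpr hm
  have hjR : (1:ℝ) ≤ (j:ℝ) := by exact_mod_cast hj1
  set c : ℝ := 2 * Real.pi * (j:ℝ) with hc
  have hcpos : 0 < c := by positivity
  have hne : m ≠ 1 := by omega
  have hsqrt2 : Real.sqrt 2 ≤ 2 := by
    nlinarith [Real.sq_sqrt (by norm_num : (0:ℝ) ≤ 2), Real.sqrt_nonneg 2]
  have hpi : 3 ≤ Real.pi := Real.pi_gt_three.le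
  have key : ∀ x : ℝ, |x| ≤ 2 → |Real.sqrt 2 * x / c| ≤ 2 / (j:ℝ) := by
    intro x hx
    rw [abs_div, abs_of_pos hcpos, div_le_div_iff₀ hcpos (by linarith)]
    have habs : |Real.sqrt 2 * x| ≤ 4 := by
      rw [abs_mul, abs_of_nonneg (Real.sqrt_nonneg 2)]
      nlinarith [Real.sqrt_nonneg 2, abs_nonneg x]
    rw [hc]
    nlinarith [Real.pi_gt_three, abs_nonneg (Real.sqrt 2 * x),
      mul_le_mul habs (le_refl (j:ℝ)) (by linarith) (by norm_num)]
  rcases Nat.even_or_odd m with he | ho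
  · have hmod : m % 2 = 0 := Nat.even_iff.mp he
    have hE : trigE m t = Real.sqrt 2 * ((1 - Real.cos (c * t)) / c) := by
      simp only [trigE, trigBasis, hne, hmod, if_false, if_true, ← hj]
      rw [intervalIntegral.integral_const_mul, ← hc,
        my_integral_sin_mul c (ne_of_gt hcpos) t]
    rw [hE]
    have : Real.sqrt 2 * ((1 - Real.cos (c * t)) / c) = Real.sqrt 2 * (1 - Real.cos (c*t)) / c := by ring
    rw [this]
    apply key
    have := Real.neg_one_le_cos (c*t)
    have := Real.cos_le_one (c*t)
    rw [abs_le]; constructor <;> linarith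
  · have hmod : ¬ (m % 2 = 0) := by rw [Nat.odd_iff] at ho; omega
    have hE : trigE m t = Real.sqrt 2 * (Real.sin (c * t) / c) := by
      simp only [trigE, trigBasis, hne, hmod, if_false, if_true, ← hj]
      rw [intervalIntegral.integral_const_mul, ← hc,
        my_integral_cos_mul c (ne_of_gt hcpos) t]
    rw [hE]
    have : Real.sqrt 2 * (Real.sin (c * t) / c) = Real.sqrt 2 * Real.sin (c*t) / c := by ring
    rw [this]
    apply key
    have := Real.neg_one_le_sin (c*t)
    have := Real.sin_le_one (c*t)
    rw [abs_le]; constructor <;> linarith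

lemma term_bound (m : ℕ) (hm : 2 ≤ m) (t : ℝ) (ht : t ∈ Set.Icc (0:ℝ) 1) :
    trigE m t ^ 2 + (∫ τ in (0:ℝ)..t, trigE m τ ^ 2) ≤ 72 / (m:ℝ)^2 := by
  set j : ℕ := m / 2 with hj
  have hj1 : 1 ≤ j := Nat.one_le_div_iff (by norm_num) |>.mpr hm
  have hjR : (1:ℝ) ≤ (j:ℝ) := by exact_mod_cast hj1
  have hsq : ∀ τ : ℝ, trigE m τ ^ 2 ≤ 4 / (j:ℝ)^2 := by
    intro τ
    have h := trigE_abs_le m hm τ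
    have := abs_nonneg (trigE m τ)
    calc trigE m τ ^ 2 = |trigE m τ|^2 := (sq_abs _).symm
      _ ≤ (2/(j:ℝ))^2 := by nlinarith
      _ = 4 / (j:ℝ)^2 := by rw [div_pow]; norm_num
  have hint : (∫ τ in (0:ℝ)..t, trigE m τ ^ 2) ≤ 4 / (j:ℝ)^2 := by
    have hb := intervalIntegral.norm_integral_le_of_norm_le_const
      (C := 4/(j:ℝ)^2) (f := fun τ => trigE m τ ^ 2) (a := (0:ℝ)) (b := t) ?_
    · calc (∫ τ in (0:ℝ)..t, trigE m τ ^ 2) ≤ |∫ τ in (0:ℝ)..t, trigE m τ ^ 2| := le_abs_self _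
        _ ≤ 4/(j:ℝ)^2 * |t - 0| := hb
        _ ≤ 4/(j:ℝ)^2 * 1 := by
            apply mul_le_mul_of_nonneg_left _ (by positivity)
            rw [sub_zero, abs_of_nonneg ht.1]; exact ht.2
        _ = 4/(j:ℝ)^2 := mul_one _
    · intro τ _
      rw [Real.norm_eq_abs, abs_of_nonneg (sq_nonneg _)]
      exact hsq τ
  have hjm : (m:ℝ) ≤ 3 * (j:ℝ) := by
    have : m ≤ 3 * j := by rw [hj]; omega
    exact_mod_cast this
  have h8 : 8 / (j:ℝ)^2 ≤ 72 / (m:ℝ)^2 := by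
    have hmR : (2:ℝ) ≤ (m:ℝ) := by exact_mod_cast hm
    rw [div_le_div_iff₀ (by positivity) (by positivity)]
    nlinarith [hjm, hmR]
  calc trigE m t ^ 2 + (∫ τ in (0:ℝ)..t, trigE m τ ^ 2) ≤ 4/(j:ℝ)^2 + 4/(j:ℝ)^2 := by
        exact add_le_add (hsq t) hint
    _ = 8 / (j:ℝ)^2 := by ring
    _ ≤ 72 / (m:ℝ)^2 := h8

lemma tele_hasSum (k : ℕ) (hk : 1 ≤ k) :
    HasSum (fun l : ℕ => 1/((k+l:ℕ):ℝ) - 1/((k+1+l:ℕ):ℝ)) (1/(k:ℝ)) := by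
  have hpos : ∀ l : ℕ, (0:ℝ) < ((k+l:ℕ):ℝ) := by
    intro l
    have : 1 ≤ k + l := by omega
    exact_mod_cast Nat.lt_of_lt_of_le Nat.zero_lt_one this
  have hnn : ∀ l : ℕ, 0 ≤ 1/((k+l:ℕ):ℝ) - 1/((k+1+l:ℕ):ℝ) := by
    intro l
    have h1 := hpos l
    have h2 : ((k+l:ℕ):ℝ) ≤ ((k+1+l:ℕ):ℝ) := by exact_mod_cast by omega
    have := one_div_le_one_div_of_le h1 h2
    linarith
  rw [hasSum_iff_tendsto_nat_of_nonneg hnn]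
  have hsum : ∀ n, ∑ i ∈ Finset.range n, (1/((k+i:ℕ):ℝ) - 1/((k+1+i:ℕ):ℝ))
      = 1/(k:ℝ) - 1/((k+n:ℕ):ℝ) := by
    intro n
    have h := Finset.sum_range_sub' (f := fun i => 1/((k+i:ℕ):ℝ)) n
    simpa [show ∀ i, k+1+i = k+(i+1) from fun i => by omega] using h
  simp only [hsum]
  have ht : Filter.Tendsto (fun n : ℕ => ((k+n:ℕ):ℝ)) Filter.atTop Filter.atTop := by
    have hmono : ∀ n : ℕ, (n:ℝ) ≤ ((k+n:ℕ):ℝ) := fun n => by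
      exact_mod_cast Nat.le_add_left n k
    exact Filter.tendsto_atTop_mono hmono tendsto_natCast_atTop_atTop
  have h0 : Filter.Tendsto (fun n : ℕ => 1/((k+n:ℕ):ℝ)) Filter.atTop (nhds 0) := by
    simpa [one_div, Pi.inv_def] using ht.inv_tendsto_atTop
  simpa using (h0.const_sub (1/(k:ℝ)))

theorem trig_tail_bound :
    ∃ C > (0:ℝ), ∀ k : ℕ, 1 ≤ k → ∀ t ∈ Set.Icc (0:ℝ) 1,
      Summable (fun l : ℕ =>
        trigE (k + 1 + l) t ^ 2 + ∫ τ in (0:ℝ)..t, trigE (k + 1 + l) τ ^ 2) ∧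
      (∑' l : ℕ,
        (trigE (k + 1 + l) t ^ 2 + ∫ τ in (0:ℝ)..t, trigE (k + 1 + l) τ ^ 2)) ≤ C / k := by
  refine ⟨72, by norm_num, fun k hk t ht => ?_⟩
  set f : ℕ → ℝ := fun l =>
    trigE (k + 1 + l) t ^ 2 + ∫ τ in (0:ℝ)..t, trigE (k + 1 + l) τ ^ 2 with hf
  set g : ℕ → ℝ := fun l => 72 * ((((k+1+l:ℕ)):ℝ)^2)⁻¹ with hg
  have hle : ∀ l, f l ≤ g l := by
    intro l
    have := term_bound (k+1+l) (by omega) t ht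
    rw [div_eq_mul_inv] at this
    exact this
  have hnn : ∀ l, 0 ≤ f l := by
    intro l
    apply add_nonneg (sq_nonneg _)
    exact intervalIntegral.integral_nonneg ht.1 (fun u _ => sq_nonneg _)
  have hgs : Summable g := by
    have h2 : Summable (fun n : ℕ => (((n:ℕ):ℝ)^2)⁻¹) :=
      Real.summable_nat_pow_inv.mpr one_lt_two
    have h3 := (summable_nat_add_iff (k+1)).mpr h2
    exact (h3.mul_left 72).congr (fun l => by rw [show l+(k+1) = k+1+l by omega])
  have hfs : Summable f := Summable.of_nonneg_of_le hnn hle hgs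
  refine ⟨hfs, ?_⟩
  have htele := tele_hasSum k hk
  have hle2 : ∀ l : ℕ, ((((k+1+l:ℕ)):ℝ)^2)⁻¹ ≤ 1/((k+l:ℕ):ℝ) - 1/((k+1+l:ℕ):ℝ) := by
    intro l
    have ha : (1:ℝ) ≤ ((k+l:ℕ):ℝ) := by exact_mod_cast by omega
    have hb : ((k+1+l:ℕ):ℝ) = ((k+l:ℕ):ℝ) + 1 := by push_cast; ring
    set a : ℝ := ((k+l:ℕ):ℝ)
    rw [hb]
    have hsub : 1/a - 1/(a+1) = 1/(a*(a+1)) := by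
      field_simp
      ring
    rw [hsub, inv_eq_one_div]
    apply one_div_le_one_div_of_le (by positivity)
    nlinarith
  have hhs : Summable (fun l : ℕ => ((((k+1+l:ℕ)):ℝ)^2)⁻¹) :=
    Summable.of_nonneg_of_le (fun l => by positivity) hle2 htele.summable
  calc ∑' l, f l ≤ ∑' l, g l := Summable.tsum_le_tsum hle hfs hgs
    _ = 72 * ∑' l, ((((k+1+l:ℕ)):ℝ)^2)⁻¹ := tsum_mul_left
    _ ≤ 72 * (1/(k:ℝ)) := by
        apply mul_le_mul_of_nonneg_left _ (by norm_num)
        rw [← htele.tsum_eq]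
        exact Summable.tsum_le_tsum hle2 hhs htele.summable
    _ = 72 / (k:ℝ) := by ring
end

section
/- Let b, σ, x₀ be real numbers and let (e_j)_{j ≥ 1} be a sequence of continuous real-valued functions on ℝ, with E_j(t) := ∫₀ᵗ e_j(s) ds. For a multi-index α (a finitely supported function from the positive integers to ℕ) set |α| = ∑_j α_j, α! = ∏_j (α_j!), and define x_α(t) := (x₀ · σ^{|α|} · exp(bt) / √(α!)) · ∏_j E_j(t)^{α_j} (the product being over the finitely many j with α_j > 0). Then for every multi-index α and every real t, the function x_α is differentiable at t with derivative x_α′(t) = b · x_α(t) + σ · ∑_{j : α_j ≥ 1} √(α_j) · e_j(t) · x_{α⁻(j)}(t), and x_α(0) = x₀ if α = 0 while x_α(0) = 0 otherwise. -/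
open Real intervalIntegral Finsupp

/-- `E_j(t) = ∫₀ᵗ e_j(s) ds`. -/
noncomputable def antideriv (e : ℕ+ → ℝ → ℝ) (j : ℕ+) (t : ℝ) : ℝ :=
  ∫ s in (0:ℝ)..t, e j s

/-- The chaos coefficient of geometric Brownian motion:
`x_α(t) = x₀ σ^{|α|} exp(bt) / √(α!) · ∏_j E_j(t)^{α_j}`. -/
noncomputable def gbmCoef (b σ x₀ : ℝ) (e : ℕ+ → ℝ → ℝ) (α : ℕ+ →₀ ℕ) (t : ℝ) : ℝ :=
  x₀ * σ ^ (α.sum fun _ m => m) * Real.exp (b * t)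
    / Real.sqrt ((α.prod fun _ m => Nat.factorial m : ℕ) : ℝ)
    * ∏ j ∈ α.support, (antideriv e j t) ^ (α j)

lemma antideriv_hasDerivAt (e : ℕ+ → ℝ → ℝ) (he : ∀ j, Continuous (e j)) (j : ℕ+) (t : ℝ) :
    HasDerivAt (antideriv e j) (e j t) t :=
  intervalIntegral.integral_hasDerivAt_right ((he j).intervalIntegrable _ _)
    (he j).aestronglyMeasurable.stronglyMeasurableAtFilter (he j).continuousAt

theorem gbm_propagator_solution (b σ x₀ : ℝ) (e : ℕ+ → ℝ → ℝ)
    (he : ∀ j, Continuous (e j)) (α : ℕ+ →₀ ℕ) (t : ℝ) :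
    HasDerivAt (gbmCoef b σ x₀ e α)
      (b * gbmCoef b σ x₀ e α t +
        σ * ∑ j ∈ α.support,
          Real.sqrt (α j) * e j t * gbmCoef b σ x₀ e (α - Finsupp.single j 1) t) t ∧
    gbmCoef b σ x₀ e α 0 = if α = 0 then x₀ else 0 := by
  classical
  constructor
  · -- derivative statement
    set S := α.support with hS
    set n := α.sum fun _ m => m with hn
    set F : ℝ := Real.sqrt ((α.prod fun _ m => Nat.factorial m : ℕ) : ℝ) with hF
    -- derivative of the product of antiderivatives
    have hP : HasDerivAt (fun s => ∏ j ∈ S, (antideriv e j s) ^ (α j))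
        (∑ j ∈ S, (∏ k ∈ S.erase j, (antideriv e k t) ^ (α k)) *
          ((α j : ℝ) * (antideriv e j t) ^ (α j - 1) * e j t)) t := by
      have := HasDerivAt.finset_prod (x := t) (u := S)
        (f := fun j s => (antideriv e j s) ^ (α j))
        (f' := fun j => (α j : ℝ) * (antideriv e j t) ^ (α j - 1) * e j t)
        (fun i _ => (antideriv_hasDerivAt e he i t).pow (α i))
      simpa [smul_eq_mul, Finset.prod_fn] using this
    have hexp : HasDerivAt (fun s : ℝ => Real.exp (b * s)) (Real.exp (b * t) * b) t :=
      by simpa using ((hasDerivAt_id t).const_mul b).exp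
    have hmain : HasDerivAt (gbmCoef b σ x₀ e α)
        ((x₀ * σ ^ n * (Real.exp (b * t) * b) / F) *
            (∏ j ∈ S, (antideriv e j t) ^ (α j)) +
          (x₀ * σ ^ n * Real.exp (b * t) / F) *
            (∑ j ∈ S, (∏ k ∈ S.erase j, (antideriv e k t) ^ (α k)) *
              ((α j : ℝ) * (antideriv e j t) ^ (α j - 1) * e j t))) t := by
      have := (((hexp.const_mul (x₀ * σ ^ n)).div_const F).mul hP)
      unfold gbmCoef
      refine this.congr_of_eventuallyEq (Filter.Eventually.of_forall fun x => ?_)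
      simp only [Pi.mul_apply]
      ring
    convert hmain using 1
    have key : ∀ j ∈ S,
        σ * (Real.sqrt (α j) * e j t * gbmCoef b σ x₀ e (α - Finsupp.single j 1) t) =
        x₀ * σ ^ n * Real.exp (b * t) / F *
          ((∏ k ∈ S.erase j, (antideriv e k t) ^ (α k)) *
            ((α j : ℝ) * (antideriv e j t) ^ (α j - 1) * e j t)) := by
      intro j hj
      have hj1 : 1 ≤ α j := by
        have := Finsupp.mem_support_iff.mp hj
        omega
      set β := α - Finsupp.single j 1 with hβdef
      have hβ : ∀ k, β k = if k = j then α j - 1 else α k := by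
        intro k
        rw [hβdef, Finsupp.tsub_apply, Finsupp.single_apply]
        by_cases h : k = j
        · simp [h]
        · rw [if_neg (fun hh : j = k => h hh.symm), if_neg h, Nat.sub_zero]
      have hsupp : β.support ⊆ S := Finsupp.support_tsub
      -- sum identity
      have hsum : (β.sum fun _ m => m) + 1 = n := by
        have h1 : (β.sum fun _ m => m) = ∑ k ∈ S, β k :=
          Finsupp.sum_of_support_subset _ hsupp _ (fun _ _ => rfl)
        have h2 : n = ∑ k ∈ S, α k := by
          rw [hn]; rfl
        have h3 : ∑ k ∈ S, β k = (α j - 1) + ∑ k ∈ S.erase j, α k := by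
          rw [← Finset.add_sum_erase S β hj, hβ j]
          simp only [if_pos rfl]
          congr 1
          exact Finset.sum_congr rfl fun k hk => by
            rw [hβ k, if_neg (Finset.ne_of_mem_erase hk)]
        have h4 : ∑ k ∈ S, α k = α j + ∑ k ∈ S.erase j, α k :=
          (Finset.add_sum_erase S α hj).symm
        omega
      -- factorial identity
      have hfact : (α.prod fun _ m => Nat.factorial m) =
          α j * (β.prod fun _ m => Nat.factorial m) := by
        have h1 : (β.prod fun _ m => Nat.factorial m) = ∏ k ∈ S, Nat.factorial (β k) :=
          Finsupp.prod_of_support_subset _ hsupp _ (fun _ _ => rfl)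
        have h2 : (α.prod fun _ m => Nat.factorial m) = ∏ k ∈ S, Nat.factorial (α k) := rfl
        rw [h1, h2, ← Finset.mul_prod_erase S _ hj, ← Finset.mul_prod_erase S (fun k => Nat.factorial (β k)) hj,
          hβ j, if_pos rfl, ← mul_assoc, Nat.mul_factorial_pred (by omega)]
        congr 1
        exact Finset.prod_congr rfl fun k hk => by
          rw [hβ k, if_neg (Finset.ne_of_mem_erase hk)]
      -- product identity
      have hprod : (∏ k ∈ β.support, (antideriv e k t) ^ (β k)) =
          (antideriv e j t) ^ (α j - 1) * ∏ k ∈ S.erase j, (antideriv e k t) ^ (α k) := by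
        have h1 : (∏ k ∈ β.support, (antideriv e k t) ^ (β k)) =
            ∏ k ∈ S, (antideriv e k t) ^ (β k) := by
          refine Finset.prod_subset hsupp fun k _ hk => ?_
          rw [Finsupp.notMem_support_iff.mp hk, pow_zero]
        rw [h1, ← Finset.mul_prod_erase S _ hj, hβ j, if_pos rfl]
        congr 1
        exact Finset.prod_congr rfl fun k hk => by
          rw [hβ k, if_neg (Finset.ne_of_mem_erase hk)]
      -- sqrt identity
      have hα0 : (0:ℝ) < (α j : ℝ) := by exact_mod_cast hj1
      have hβfpos : (0:ℝ) < ((β.prod fun _ m => Nat.factorial m : ℕ) : ℝ) := by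
        have : 0 < (β.prod fun _ m => Nat.factorial m) :=
          Finset.prod_pos fun k _ => Nat.factorial_pos _
        exact_mod_cast this
      have hFeq : F = Real.sqrt (α j) *
          Real.sqrt ((β.prod fun _ m => Nat.factorial m : ℕ) : ℝ) := by
        rw [hF, hfact]
        push_cast
        exact Real.sqrt_mul (le_of_lt hα0) _
      have hGpos : 0 < Real.sqrt ((β.prod fun _ m => Nat.factorial m : ℕ) : ℝ) :=
        Real.sqrt_pos.mpr hβfpos
      have hsq : Real.sqrt (α j) * Real.sqrt (α j) = (α j : ℝ) :=
        Real.mul_self_sqrt (le_of_lt hα0)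
      have hsqrtpos : 0 < Real.sqrt (α j) := Real.sqrt_pos.mpr hα0
      rw [gbmCoef, hprod, hFeq, ← hsum, pow_succ, ← hsq]
      generalize hg : Real.sqrt ((β.prod fun _ m => Nat.factorial m : ℕ) : ℝ) = g at hGpos ⊢
      generalize hr : Real.sqrt ((α j : ℕ) : ℝ) = r at hsqrtpos ⊢
      have hg0 : g ≠ 0 := ne_of_gt hGpos
      have hr0 : r ≠ 0 := ne_of_gt hsqrtpos
      field_simp
      rw [Real.sqrt_sq hsqrtpos.le]
    congr 1
    · rw [gbmCoef]; ring
    · rw [Finset.mul_sum, Finset.mul_sum]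
      exact Finset.sum_congr rfl key
  · -- initial condition
    by_cases h : α = 0
    · simp [h, gbmCoef]
    · rw [if_neg h, gbmCoef]
      obtain ⟨j, hj⟩ := Finsupp.support_nonempty_iff.mpr h
      have : (∏ k ∈ α.support, (antideriv e k 0) ^ (α k)) = 0 := by
        refine Finset.prod_eq_zero hj ?_
        have h0 : antideriv e j 0 = 0 := intervalIntegral.integral_same
        rw [h0]
        exact zero_pow (Finsupp.mem_support_iff.mp hj)
      rw [this, mul_zero]
end
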